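/- For every a > 0, the upper ν-partition entropy satisfies h_a ≤ s_{am} (Lemma 2.6). -/

import Mathlib

open MeasureTheory Filter
open scoped ENNReal

noncomputable section

/-- The half-open unit cube `(0,1]^m`. -/
def unitCube (m : ℕ) : Set (Fin m → ℝ) := {x | ∀ i, x i ∈ Set.Ioc (0 : ℝ) 1}

/-- The half-open dyadic cube of generation `n` indexed by `l ∈ ℤ^m`. -/
def dyadicCube (m n : ℕ) (l : Fin m → ℤ) : Set (Fin m → ℝ) :=
  {x | ∀ i, x i ∈ Set.Ioc ((l i : ℝ) / 2 ^ n) (((l i : ℝ) + 1) / 2 ^ n)}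

/-- `β_n^ν(s) = log (∑_{C ∈ 𝒟_n} ν(C)^s) / log (2^n)`, the sum running over all
dyadic cubes of generation `n` with positive `ν`-measure. -/
def betaN (m : ℕ) (ν : Measure (Fin m → ℝ)) (n : ℕ) (s : ℝ) : ℝ :=
  Real.log (∑' l : {l : Fin m → ℤ // 0 < ν (dyadicCube m n l)},
      (ν (dyadicCube m n l.1)).toReal ^ s) / Real.log ((2 : ℝ) ^ n)

/-- The `L^q`-spectrum `β_ν(s) = limsup_n β_n^ν(s)`. -/
def lqSpectrum (m : ℕ) (ν : Measure (Fin m → ℝ)) (s : ℝ) : ℝ :=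
  limsup (fun n => betaN m ν n s) atTop

/-- `s_b = inf {s > 0 : β_ν(s) - b·s ≤ 0}`. -/
def sb (m : ℕ) (ν : Measure (Fin m → ℝ)) (b : ℝ) : ℝ :=
  sInf {s : ℝ | 0 < s ∧ lqSpectrum m ν s - b * s ≤ 0}

/-- A half-open axis-parallel cube `∏_i (a_i, a_i + h]` with `h > 0`. -/
def IsHalfOpenCube {m : ℕ} (Q : Set (Fin m → ℝ)) : Prop :=
  ∃ (a : Fin m → ℝ) (h : ℝ), 0 < h ∧ Q = {x | ∀ i, x i ∈ Set.Ioc (a i) (a i + h)}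

/-- A finite partition of the unit cube into half-open axis-parallel subcubes. -/
def IsCubePartition (m : ℕ) (P : Finset (Set (Fin m → ℝ))) : Prop :=
  (∀ Q ∈ P, IsHalfOpenCube Q ∧ Q ⊆ unitCube m) ∧
    (P : Set (Set (Fin m → ℝ))).PairwiseDisjoint id ∧
    ⋃₀ (P : Set (Set (Fin m → ℝ))) = unitCube m

/-- `𝔍_a(Q) = Λ(Q)^a · ν(Q)`. -/
def Jfun (m : ℕ) (ν : Measure (Fin m → ℝ)) (a : ℝ) (Q : Set (Fin m → ℝ)) : ℝ :=
  (volume Q).toReal ^ a * (ν Q).toReal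

/-- `𝒩_a(t)`: the minimal cardinality of a partition of the unit cube into half-open
cubes `Q`, all satisfying `𝔍_a(Q) < 1/t`. -/
def partCount (m : ℕ) (ν : Measure (Fin m → ℝ)) (a t : ℝ) : ℕ :=
  sInf {k : ℕ | ∃ P : Finset (Set (Fin m → ℝ)), IsCubePartition m P ∧
    (∀ Q ∈ P, Jfun m ν a Q < 1 / t) ∧ P.card = k}

/-- The upper `ν`-partition entropy `h_a = limsup_{t → ∞} log 𝒩_a(t) / log t`. -/
def hPart (m : ℕ) (ν : Measure (Fin m → ℝ)) (a : ℝ) : ℝ≥0∞ :=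
  limsup (fun t : ℝ => ENNReal.ofReal (Real.log (partCount m ν a t) / Real.log t)) atTop

set_option linter.unusedSectionVars false
set_option maxHeartbeats 1000000
namespace L26

variable {m : ℕ}

lemma mem_dyadic_iff {n : ℕ} {l : Fin m → ℤ} {x : Fin m → ℝ} :
    x ∈ dyadicCube m n l ↔ ∀ i, (l i : ℝ) < 2 ^ n * x i ∧ 2 ^ n * x i ≤ l i + 1 := by
  have h2 : (0:ℝ) < 2 ^ n := by positivity
  simp only [dyadicCube, Set.mem_setOf_eq, Set.mem_Ioc]
  refine forall_congr' fun i => ?_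
  rw [div_lt_iff₀ h2, le_div_iff₀ h2]
  constructor
  · rintro ⟨h1, h2'⟩; constructor <;> nlinarith
  · rintro ⟨h1, h2'⟩; constructor <;> nlinarith

/-- index of the dyadic cube of generation `n` containing `x` -/
def idx (n : ℕ) (x : Fin m → ℝ) : Fin m → ℤ := fun i => ⌈(2:ℝ) ^ n * x i⌉ - 1

lemma mem_idx (n : ℕ) (x : Fin m → ℝ) : x ∈ dyadicCube m n (idx n x) := by
  rw [mem_dyadic_iff]
  intro i
  constructor
  · push_cast [idx]
    have := Int.ceil_lt_add_one ((2:ℝ) ^ n * x i)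
    linarith
  · push_cast [idx]
    have := Int.le_ceil ((2:ℝ) ^ n * x i)
    linarith

lemma eq_idx_of_mem {n : ℕ} {l : Fin m → ℤ} {x : Fin m → ℝ} (h : x ∈ dyadicCube m n l) :
    l = idx n x := by
  rw [mem_dyadic_iff] at h
  funext i
  obtain ⟨h1, h2⟩ := h i
  have : ⌈(2:ℝ) ^ n * x i⌉ = l i + 1 := by
    rw [Int.ceil_eq_iff]
    constructor
    · push_cast; linarith
    · push_cast; linarith
  simp [idx, this]

lemma dyadic_nested {p q : ℕ} {l l' : Fin m → ℤ} {x : Fin m → ℝ} (hpq : p ≤ q)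
    (hx : x ∈ dyadicCube m p l) (hx' : x ∈ dyadicCube m q l') :
    dyadicCube m q l' ⊆ dyadicCube m p l := by
  intro y hy
  rw [mem_dyadic_iff] at hx hx' hy ⊢
  intro i
  obtain ⟨h1, h2⟩ := hx i
  obtain ⟨h1', h2'⟩ := hx' i
  obtain ⟨g1, g2⟩ := hy i
  -- integer bounds : l i * 2^(q-p) ≤ l' i and l' i + 1 ≤ (l i + 1) * 2^(q-p)
  have hqp : (2:ℝ) ^ q = 2 ^ p * 2 ^ (q - p) := by
    rw [← pow_add]; congr 1; omega
  have c1 : ((l i * 2 ^ (q - p) : ℤ) : ℝ) < 2 ^ q * x i := by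
    push_cast; rw [hqp]; nlinarith [pow_pos (by norm_num : (0:ℝ) < 2) (q-p)]
  have c2 : 2 ^ q * x i ≤ (((l i + 1) * 2 ^ (q - p) : ℤ) : ℝ) := by
    push_cast; rw [hqp]; nlinarith [pow_pos (by norm_num : (0:ℝ) < 2) (q-p)]
  have i1 : l i * 2 ^ (q - p) < l' i + 1 := by
    have := lt_of_lt_of_le c1 h2'
    exact_mod_cast this
  have i2 : l' i < (l i + 1) * 2 ^ (q - p) := by
    have := lt_of_lt_of_le h1' c2
    exact_mod_cast this
  have i1' : l i * 2 ^ (q - p) ≤ l' i := by omega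
  have i2' : l' i + 1 ≤ (l i + 1) * 2 ^ (q - p) := by omega
  have hqp' : (2:ℝ) ^ (q-p) > 0 := by positivity
  constructor
  · have : ((l i * 2 ^ (q - p) : ℤ) : ℝ) ≤ l' i := by exact_mod_cast i1'
    push_cast at this
    rw [hqp] at g1; nlinarith
  · have : ((l' i + 1 : ℤ) : ℝ) ≤ ((l i + 1) * 2 ^ (q - p) : ℤ) := by exact_mod_cast i2'
    push_cast at this
    rw [hqp] at g2; nlinarith

/-- admissible indices at generation `n` -/
def B (m n : ℕ) : Finset (Fin m → ℤ) := Finset.Icc 0 (fun _ => 2 ^ n - 1)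

lemma mem_B {n : ℕ} {l : Fin m → ℤ} : l ∈ B m n ↔ ∀ i, 0 ≤ l i ∧ l i < 2 ^ n := by
  simp only [B, Finset.mem_Icc, Pi.le_def]
  constructor
  · rintro ⟨h1, h2⟩ i; have := h1 i; have := h2 i; simp at *; omega
  · intro h; constructor <;> intro i <;> [skip; skip] <;> (have := h i; simp; omega)

lemma unitCube_eq : unitCube m = dyadicCube m 0 0 := by
  ext x; simp [unitCube, dyadicCube]

lemma dyadic_subset_unit {n : ℕ} {l : Fin m → ℤ} (hl : l ∈ B m n) :
    dyadicCube m n l ⊆ unitCube m := by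
  intro x hx
  rw [mem_dyadic_iff] at hx
  intro i
  obtain ⟨h0, h1⟩ := mem_B.mp hl i
  obtain ⟨g0, g1⟩ := hx i
  have h2 : (0:ℝ) < 2 ^ n := by positivity
  have c0 : (0:ℝ) ≤ l i := by exact_mod_cast h0
  have c1 : ((l i : ℝ) + 1) ≤ 2 ^ n := by
    have : (l i : ℝ) + 1 ≤ ((2^n : ℤ) : ℝ) := by exact_mod_cast h1
    simpa using this
  constructor
  · nlinarith
  · nlinarith

lemma mem_unit_idx_mem_B {n : ℕ} {x : Fin m → ℝ} (hx : x ∈ unitCube m) : idx n x ∈ B m n := by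
  rw [mem_B]
  intro i
  obtain ⟨h0, h1⟩ := hx i
  have h2 : (0:ℝ) < 2 ^ n := by positivity
  have c1 : 0 < ⌈(2:ℝ) ^ n * x i⌉ := by
    rw [Int.lt_ceil]; push_cast; nlinarith
  have c2 : ⌈(2:ℝ) ^ n * x i⌉ ≤ 2 ^ n := by
    rw [Int.ceil_le]; push_cast; nlinarith
  simp only [idx]; omega

lemma dyadic_disjoint_of_ne {n : ℕ} {l l' : Fin m → ℤ} (h : l ≠ l') :
    Disjoint (dyadicCube m n l) (dyadicCube m n l') := by
  rw [Set.disjoint_left]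
  intro x hx hx'
  exact h ((eq_idx_of_mem hx).trans (eq_idx_of_mem hx').symm)

lemma unit_eq_union (n : ℕ) : ⋃ l ∈ B m n, dyadicCube m n l = unitCube m := by
  apply Set.Subset.antisymm
  · simp only [Set.iUnion_subset_iff]
    exact fun l hl => dyadic_subset_unit hl
  · intro x hx
    exact Set.mem_biUnion (mem_unit_idx_mem_B hx) (mem_idx n x)

lemma dyadic_eq_pi (n : ℕ) (l : Fin m → ℤ) :
    dyadicCube m n l =
      Set.pi Set.univ (fun i => Set.Ioc ((l i : ℝ) / 2 ^ n) (((l i : ℝ) + 1) / 2 ^ n)) := by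
  ext x; simp [dyadicCube, Set.mem_pi]

lemma measurableSet_dyadic (n : ℕ) (l : Fin m → ℤ) : MeasurableSet (dyadicCube m n l) := by
  rw [dyadic_eq_pi]
  exact MeasurableSet.univ_pi (fun i => measurableSet_Ioc)

lemma volume_dyadic_toReal (n : ℕ) (l : Fin m → ℤ) :
    (volume (dyadicCube m n l)).toReal = ((1 : ℝ) / 2 ^ n) ^ m := by
  rw [dyadic_eq_pi, volume_pi_pi]
  have h2 : (0:ℝ) < 2 ^ n := by positivity
  have : ∀ i : Fin m, volume (Set.Ioc ((l i : ℝ) / 2 ^ n) (((l i : ℝ) + 1) / 2 ^ n))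
      = ENNReal.ofReal (1 / 2 ^ n) := by
    intro i
    rw [Real.volume_Ioc]
    congr 1
    field_simp
    ring
  simp only [this, Finset.prod_const, Finset.card_univ, Fintype.card_fin]
  rw [← ENNReal.ofReal_pow (by positivity)]
  rw [ENNReal.toReal_ofReal (by positivity)]

variable (ν : Measure (Fin m → ℝ)) [IsProbabilityMeasure ν]

lemma nu_le_one (Q : Set (Fin m → ℝ)) : ν Q ≤ 1 := prob_le_one

lemma nu_compl_zero (hν : ν (unitCube m) = 1) : ν (unitCube m)ᶜ = 0 := by
  have hmeas : MeasurableSet (unitCube m) := by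
    rw [unitCube_eq]; exact measurableSet_dyadic 0 0
  rw [measure_compl hmeas (measure_ne_top ν _), hν, measure_univ, tsub_self]

lemma nu_zero_of_not_mem_B (hν : ν (unitCube m) = 1) {n : ℕ} {l : Fin m → ℤ}
    (hl : l ∉ B m n) : ν (dyadicCube m n l) = 0 := by
  apply measure_mono_null _ (nu_compl_zero ν hν)
  intro x hx hxu
  exact hl (by rw [eq_idx_of_mem hx]; exact mem_unit_idx_mem_B hxu)

lemma sum_B_measure (hν : ν (unitCube m) = 1) (n : ℕ) :
    ∑ l ∈ B m n, ν (dyadicCube m n l) = 1 := by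
  rw [← measure_biUnion_finset _ (fun l _ => measurableSet_dyadic n l)]
  · rw [show ⋃ l ∈ B m n, dyadicCube m n l = unitCube m from unit_eq_union n, hν]
  · intro l _ l' _ hne
    exact dyadic_disjoint_of_ne hne

lemma tsum_eq_sum_B {s : ℝ} (hs : s ≠ 0) (hν : ν (unitCube m) = 1) (n : ℕ) :
    (∑' l : {l : Fin m → ℤ // 0 < ν (dyadicCube m n l)},
        (ν (dyadicCube m n l.1)).toReal ^ s)
      = ∑ l ∈ B m n, (ν (dyadicCube m n l)).toReal ^ s := by
  have hzero : ∀ l : Fin m → ℤ, ν (dyadicCube m n l) = 0 →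
      (ν (dyadicCube m n l)).toReal ^ s = 0 := by
    intro l h; rw [h]; simp [Real.zero_rpow hs]
  have hsub := tsum_subtype {l : Fin m → ℤ | 0 < ν (dyadicCube m n l)}
      (fun l => (ν (dyadicCube m n l)).toReal ^ s)
  refine Eq.trans hsub ?_
  have hind : ∀ l, ({l : Fin m → ℤ | 0 < ν (dyadicCube m n l)}.indicator
      (fun l => (ν (dyadicCube m n l)).toReal ^ s)) l
        = (ν (dyadicCube m n l)).toReal ^ s := by
    intro l
    by_cases h : 0 < ν (dyadicCube m n l)
    · exact Set.indicator_of_mem (show l ∈ {l : Fin m → ℤ | 0 < ν (dyadicCube m n l)} from h) _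
    · have hmem : l ∉ {l : Fin m → ℤ | 0 < ν (dyadicCube m n l)} := h
      rw [Set.indicator_of_notMem hmem]
      exact (hzero l (by simpa using h)).symm
  rw [tsum_congr hind]
  exact tsum_eq_sum (fun l hl => hzero l (nu_zero_of_not_mem_B ν hν hl))

lemma betaN_eq {s : ℝ} (hs : s ≠ 0) (hν : ν (unitCube m) = 1) (n : ℕ) :
    betaN m ν n s
      = Real.log (∑ l ∈ B m n, (ν (dyadicCube m n l)).toReal ^ s) / (n * Real.log 2) := by
  rw [betaN, tsum_eq_sum_B ν hs hν n, Real.log_pow]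

lemma Jfun_dyadic (a : ℝ) (n : ℕ) (l : Fin m → ℤ) :
    Jfun m ν a (dyadicCube m n l)
      = (((1:ℝ) / 2 ^ n) ^ m) ^ a * (ν (dyadicCube m n l)).toReal := by
  rw [Jfun, volume_dyadic_toReal]

/-- abbreviation for the partition sum -/
def Ssum (ν : Measure (Fin m → ℝ)) (n : ℕ) (s : ℝ) : ℝ :=
  ∑ l ∈ B m n, (ν (dyadicCube m n l)).toReal ^ s

lemma Ssum_nonneg (n : ℕ) (s : ℝ) : 0 ≤ Ssum ν n s :=
  Finset.sum_nonneg fun l _ => Real.rpow_nonneg ENNReal.toReal_nonneg _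

lemma card_B (n : ℕ) : (B m n).card = 2 ^ (n * m) := by
  rw [B, Pi.card_Icc]
  simp only [Pi.zero_apply]
  rw [Finset.prod_const]
  rw [Finset.card_univ, Fintype.card_fin]
  rw [Int.card_Icc]
  norm_num
  rw [show ((2:ℤ)^n) = ((2^n : ℕ) : ℤ) by push_cast; ring, Int.toNat_natCast, ← pow_mul]

lemma nuR_le_one (Q : Set (Fin m → ℝ)) : (ν Q).toReal ≤ 1 := by
  have := nu_le_one ν Q
  have h1 : (ν Q).toReal ≤ (1 : ℝ≥0∞).toReal :=
    ENNReal.toReal_mono (by norm_num) this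
  simpa using h1

lemma Ssum_le_card {n : ℕ} {s : ℝ} (hs : 0 ≤ s) : Ssum ν n s ≤ 2 ^ (n * m) := by
  have : ∀ l ∈ B m n, (ν (dyadicCube m n l)).toReal ^ s ≤ 1 := fun l _ =>
    Real.rpow_le_one ENNReal.toReal_nonneg (nuR_le_one ν _) hs
  calc Ssum ν n s ≤ (B m n).card • (1:ℝ) := Finset.sum_le_card_nsmul _ _ _ this
  _ = 2 ^ (n * m) := by rw [card_B]; simp

lemma betaN_le_m {s : ℝ} (hs : 0 < s) (hν : ν (unitCube m) = 1) (n : ℕ) :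
    betaN m ν n s ≤ m := by
  rw [betaN_eq ν (ne_of_gt hs) hν]
  rcases Nat.eq_zero_or_pos n with h | h
  · subst h; simp
  · have hden : (0:ℝ) < n * Real.log 2 := by
      have := Real.log_pos (by norm_num : (1:ℝ) < 2)
      positivity
    rw [div_le_iff₀ hden]
    rw [show (∑ l ∈ B m n, (ν (dyadicCube m n l)).toReal ^ s) = Ssum ν n s from rfl]
    rcases le_or_gt (Ssum ν n s) 1 with hS | hS
    · rcases (Ssum_nonneg ν n s).eq_or_lt with h0 | h0
      · rw [← h0, Real.log_zero]; positivity
      · calc Real.log (Ssum ν n s) ≤ Real.log 1 := Real.log_le_log h0 hS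
          _ = 0 := Real.log_one
          _ ≤ m * (n * Real.log 2) := by positivity
    · calc Real.log (Ssum ν n s) ≤ Real.log (2 ^ (n * m)) :=
            Real.log_le_log (by linarith) (Ssum_le_card ν hs.le)
      _ = (n * m) * Real.log 2 := by rw [Real.log_pow]; push_cast; ring
      _ ≤ m * (n * Real.log 2) := by
            have := Real.log_pos (by norm_num : (1:ℝ) < 2)
            push_cast; nlinarith

lemma Ssum_one (hν : ν (unitCube m) = 1) (n : ℕ) : Ssum ν n 1 = 1 := by
  unfold Ssum
  have : ∀ l ∈ B m n, (ν (dyadicCube m n l)).toReal ^ (1:ℝ) = (ν (dyadicCube m n l)).toReal :=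
    fun l _ => Real.rpow_one _
  rw [Finset.sum_congr rfl this, ← ENNReal.toReal_sum (fun l _ => measure_ne_top ν _),
    sum_B_measure ν hν n]
  simp

lemma lqSpectrum_one (hν : ν (unitCube m) = 1) : lqSpectrum m ν 1 = 0 := by
  unfold lqSpectrum
  have : (fun n => betaN m ν n 1) = fun _ => (0:ℝ) := by
    funext n
    rw [betaN_eq ν one_ne_zero hν]
    rw [show (∑ l ∈ B m n, (ν (dyadicCube m n l)).toReal ^ (1:ℝ)) = Ssum ν n 1 from rfl]
    rw [Ssum_one ν hν]
    simp
  rw [this, limsup_const]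

/-- eventual bound on `Ssum` from the `L^q`-spectrum hypothesis -/
lemma eventually_Ssum_le {s c ε : ℝ} (hs : 0 < s) (hν : ν (unitCube m) = 1)
    (hc : lqSpectrum m ν s ≤ c) (hε : 0 < ε) :
    ∀ᶠ n : ℕ in atTop, Ssum ν n s ≤ (2:ℝ) ^ ((c + ε) * n) := by
  have hbdd : IsBoundedUnder (· ≤ ·) atTop (fun n => betaN m ν n s) :=
    ⟨m, Filter.eventually_map.mpr (Filter.Eventually.of_forall (betaN_le_m ν hs hν))⟩
  have hlt : lqSpectrum m ν s < c + ε := lt_of_le_of_lt hc (by linarith)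
  have hev : ∀ᶠ n : ℕ in atTop, betaN m ν n s < c + ε :=
    Filter.eventually_lt_of_limsup_lt hlt hbdd
  filter_upwards [hev, Filter.eventually_ge_atTop 1] with n hn hn1
  rw [betaN_eq ν (ne_of_gt hs) hν,
    show (∑ l ∈ B m n, (ν (dyadicCube m n l)).toReal ^ s) = Ssum ν n s from rfl] at hn
  have hden : (0:ℝ) < n * Real.log 2 := by
    have := Real.log_pos (by norm_num : (1:ℝ) < 2)
    have : (1:ℝ) ≤ n := by exact_mod_cast hn1
    positivity
  rw [div_lt_iff₀ hden] at hn
  rcases (Ssum_nonneg ν n s).eq_or_lt with h0 | h0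
  · rw [← h0]; positivity
  · have hlog : Real.log (Ssum ν n s) < Real.log ((2:ℝ) ^ ((c + ε) * n)) := by
      rw [Real.log_rpow (by norm_num)]
      calc Real.log (Ssum ν n s) < (c + ε) * (n * Real.log 2) := hn
        _ = (c + ε) * n * Real.log 2 := by ring
    exact le_of_lt ((Real.log_lt_log_iff h0 (by positivity)).mp hlog)

variable (a : ℝ)

lemma Jfun_dyadic_rpow (ha : 0 < a) (n : ℕ) (l : Fin m → ℤ) :
    Jfun m ν a (dyadicCube m n l)
      = (2:ℝ) ^ (-(a * m * n)) * (ν (dyadicCube m n l)).toReal := by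
  rw [Jfun_dyadic]
  congr 1
  rw [one_div, inv_pow, ← pow_mul, ← Real.rpow_natCast 2 (n*m),
    ← Real.rpow_neg_one ((2:ℝ) ^ ((n*m : ℕ):ℝ))]
  rw [← Real.rpow_mul (show (0:ℝ) ≤ 2 by norm_num),
    ← Real.rpow_mul (show (0:ℝ) ≤ 2 by norm_num)]
  congr 1
  push_cast
  ring

lemma Jfun_dyadic_le (ha : 0 < a) (n : ℕ) (l : Fin m → ℤ) :
    Jfun m ν a (dyadicCube m n l) ≤ (2:ℝ) ^ (-(a * m * n)) := by
  rw [Jfun_dyadic_rpow ν a ha]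
  calc (2:ℝ) ^ (-(a * m * n)) * (ν (dyadicCube m n l)).toReal
      ≤ (2:ℝ) ^ (-(a * m * n)) * 1 := by
        apply mul_le_mul_of_nonneg_left (nuR_le_one ν _) (by positivity)
    _ = _ := mul_one _

open Classical in
/-- dyadic indices at generation `n` whose cube is `t`-heavy -/
def M (ν : Measure (Fin m → ℝ)) (a t : ℝ) (n : ℕ) : Finset (Fin m → ℤ) :=
  (B m n).filter (fun l => 1/t ≤ Jfun m ν a (dyadicCube m n l))

lemma mem_M {ν : Measure (Fin m → ℝ)} {a t : ℝ} {n : ℕ} {l : Fin m → ℤ} :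
    l ∈ M ν a t n ↔ l ∈ B m n ∧ 1/t ≤ Jfun m ν a (dyadicCube m n l) := by
  simp [M]

lemma card_M_le {s t : ℝ} (ha : 0 < a) (ht : 1 ≤ t) (hs : 0 < s) (n : ℕ) :
    ((M ν a t n).card : ℝ) * ((2:ℝ) ^ (a * m * n * s) / t ^ s) ≤ Ssum ν n s := by
  have ht0 : (0:ℝ) < t := lt_of_lt_of_le one_pos ht
  have key : ∀ l ∈ M ν a t n,
      (2:ℝ) ^ (a * m * n * s) / t ^ s ≤ (ν (dyadicCube m n l)).toReal ^ s := by
    intro l hl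
    obtain ⟨hB, hJ⟩ := mem_M.mp hl
    rw [Jfun_dyadic_rpow ν a ha] at hJ
    have hX : (0:ℝ) < (2:ℝ) ^ (a * m * (n:ℝ)) := Real.rpow_pos_of_pos two_pos _
    have hbase : (2:ℝ) ^ (a * m * (n:ℝ)) / t ≤ (ν (dyadicCube m n l)).toReal := by
      have h2 : (2:ℝ) ^ (a * m * (n:ℝ)) * (2:ℝ) ^ (-(a * m * (n:ℝ))) = 1 := by
        rw [← Real.rpow_add two_pos]; simp
      have := mul_le_mul_of_nonneg_left hJ (le_of_lt hX)
      rw [mul_one_div] at this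
      calc (2:ℝ) ^ (a * m * (n:ℝ)) / t ≤ (2:ℝ) ^ (a * m * (n:ℝ)) *
            ((2:ℝ) ^ (-(a * m * (n:ℝ))) * (ν (dyadicCube m n l)).toReal) := this
        _ = (ν (dyadicCube m n l)).toReal := by rw [← mul_assoc, h2, one_mul]
    have hmono := Real.rpow_le_rpow (by positivity) hbase hs.le
    calc (2:ℝ) ^ (a * m * n * s) / t ^ s
        = ((2:ℝ) ^ (a * m * (n:ℝ)) / t) ^ s := by
          rw [Real.div_rpow (le_of_lt hX) ht0.le, ← Real.rpow_mul (by norm_num)]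
      _ ≤ _ := hmono
  have h1 : ((M ν a t n).card) • ((2:ℝ) ^ (a * m * n * s) / t ^ s)
      ≤ ∑ l ∈ M ν a t n, (ν (dyadicCube m n l)).toReal ^ s :=
    Finset.card_nsmul_le_sum _ _ _ key
  have h2 : ∑ l ∈ M ν a t n, (ν (dyadicCube m n l)).toReal ^ s ≤ Ssum ν n s := by
    apply Finset.sum_le_sum_of_subset_of_nonneg (Finset.filter_subset _ _)
    intro l _ _
    exact Real.rpow_nonneg ENNReal.toReal_nonneg _
  calc ((M ν a t n).card : ℝ) * ((2:ℝ) ^ (a * m * n * s) / t ^ s)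
      = ((M ν a t n).card) • ((2:ℝ) ^ (a * m * n * s) / t ^ s) := (nsmul_eq_mul _ _).symm
    _ ≤ _ := le_trans h1 h2

lemma eventually_card_M_le {s ε : ℝ} (ha : 0 < a) (hs : 0 < s) (hε : 0 < ε)
    (hν : ν (unitCube m) = 1) (hc : lqSpectrum m ν s ≤ a * m * s) :
    ∀ᶠ n : ℕ in atTop, ∀ t : ℝ, 1 ≤ t →
      ((M ν a t n).card : ℝ) ≤ t ^ s * (2:ℝ) ^ (ε * n) := by
  filter_upwards [eventually_Ssum_le ν hs hν hc hε] with n hS t ht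
  have ht0 : (0:ℝ) < t := lt_of_lt_of_le one_pos ht
  have hX : (0:ℝ) < (2:ℝ) ^ (a * m * (n:ℝ) * s) := Real.rpow_pos_of_pos two_pos _
  have hT : (0:ℝ) < t ^ s := Real.rpow_pos_of_pos ht0 _
  have hE : (0:ℝ) < (2:ℝ) ^ (ε * (n:ℝ)) := Real.rpow_pos_of_pos two_pos _
  have hkey := card_M_le ν a ha ht hs n
  have hS' : Ssum ν n s ≤ (2:ℝ) ^ (a * m * (n:ℝ) * s) * (2:ℝ) ^ (ε * n) := by
    calc Ssum ν n s ≤ (2:ℝ) ^ ((a * m * s + ε) * n) := hS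
      _ = (2:ℝ) ^ (a * m * (n:ℝ) * s) * (2:ℝ) ^ (ε * n) := by
          rw [← Real.rpow_add two_pos]; ring_nf
  have h3 : ((M ν a t n).card : ℝ) * ((2:ℝ) ^ (a * m * (n:ℝ) * s) / t ^ s)
      ≤ (2:ℝ) ^ (a * m * (n:ℝ) * s) * (2:ℝ) ^ (ε * n) := le_trans hkey hS'
  calc ((M ν a t n).card : ℝ)
      = ((M ν a t n).card : ℝ) * ((2:ℝ) ^ (a * m * (n:ℝ) * s) / t ^ s)
        * (t ^ s / (2:ℝ) ^ (a * m * (n:ℝ) * s)) := by field_simp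
    _ ≤ ((2:ℝ) ^ (a * m * (n:ℝ) * s) * (2:ℝ) ^ (ε * n))
        * (t ^ s / (2:ℝ) ^ (a * m * (n:ℝ) * s)) := by
          apply mul_le_mul_of_nonneg_right h3 (by positivity)
    _ = t ^ s * (2:ℝ) ^ (ε * n) := by field_simp

lemma gen_le_of_J_ge (ha : 0 < a) (hm : 0 < m) {t : ℝ} (ht : 1 ≤ t) {n : ℕ} {l : Fin m → ℤ}
    (h : 1/t ≤ Jfun m ν a (dyadicCube m n l)) :
    (n : ℝ) ≤ Real.log t / (a * m * Real.log 2) := by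
  have ht0 : (0:ℝ) < t := lt_of_lt_of_le one_pos ht
  have h1 : 1/t ≤ (2:ℝ) ^ (-(a * m * n)) := le_trans h (Jfun_dyadic_le ν a ha n l)
  have h2 : (2:ℝ) ^ (a * m * (n:ℝ)) ≤ t := by
    have hX : (0:ℝ) < (2:ℝ) ^ (a * m * (n:ℝ)) := Real.rpow_pos_of_pos two_pos _
    have hprod : (2:ℝ) ^ (a * m * (n:ℝ)) * (2:ℝ) ^ (-(a * m * (n:ℝ))) = 1 := by
      rw [← Real.rpow_add two_pos]; simp
    have := mul_le_mul_of_nonneg_left h1 (le_of_lt hX)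
    rw [mul_one_div, hprod] at this
    rw [div_le_one ht0] at this
    exact this
  have h3 : a * m * n * Real.log 2 ≤ Real.log t := by
    calc a * m * n * Real.log 2 = Real.log ((2:ℝ) ^ (a * m * (n:ℝ))) :=
          (Real.log_rpow two_pos _).symm
      _ ≤ Real.log t := Real.log_le_log (Real.rpow_pos_of_pos two_pos _) h2
  have hd : (0:ℝ) < a * m * Real.log 2 := by
    have := Real.log_pos (by norm_num : (1:ℝ) < 2)
    have hm' : (0:ℝ) < m := by exact_mod_cast hm
    positivity
  rw [le_div_iff₀ hd]
  nlinarith [h3]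

lemma subset_parent {n : ℕ} {l : Fin m → ℤ} (hl : ∀ i, 0 ≤ l i) :
    dyadicCube m (n+1) l ⊆ dyadicCube m n (fun i => l i / 2) := by
  intro x hx
  rw [mem_dyadic_iff] at hx ⊢
  intro i
  obtain ⟨h1, h2⟩ := hx i
  have hc : 2 * (l i / 2) ≤ l i ∧ l i ≤ 2 * (l i / 2) + 1 := by
    have := hl i; omega
  have hcr1 : 2 * ((l i / 2 : ℤ) : ℝ) ≤ (l i : ℝ) := by exact_mod_cast hc.1
  have hcr2 : (l i : ℝ) ≤ 2 * ((l i / 2 : ℤ) : ℝ) + 1 := by exact_mod_cast hc.2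
  have hp : (2:ℝ) ^ (n+1) = 2 * 2 ^ n := by ring
  rw [hp] at h1 h2
  constructor
  · nlinarith
  · nlinarith

lemma exists_stopping (ha : 0 < a) (hm : 0 < m) {t : ℝ} (ht : 1 ≤ t) (x : Fin m → ℝ) :
    ∃ n : ℕ, Jfun m ν a (dyadicCube m n (idx n x)) < 1/t := by
  have ht0 : (0:ℝ) < t := lt_of_lt_of_le one_pos ht
  have hm' : (0:ℝ) < m := by exact_mod_cast hm
  have hgeo : Tendsto (fun n : ℕ => ((2:ℝ) ^ (-(a * m)) : ℝ) ^ n) atTop (nhds 0) := by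
    apply tendsto_pow_atTop_nhds_zero_of_lt_one (Real.rpow_nonneg (by norm_num) _)
    apply Real.rpow_lt_one_of_one_lt_of_neg (by norm_num)
    nlinarith
  have heq : ∀ n : ℕ, ((2:ℝ) ^ (-(a * m)) : ℝ) ^ n = (2:ℝ) ^ (-(a * m * n)) := by
    intro n
    rw [← Real.rpow_natCast ((2:ℝ) ^ (-(a * m))) n, ← Real.rpow_mul (by norm_num)]
    ring_nf
  have hev : ∀ᶠ n : ℕ in atTop, (2:ℝ) ^ (-(a * m * (n:ℝ))) < 1/t := by
    have := hgeo.eventually (eventually_lt_nhds (by positivity : (0:ℝ) < 1/t))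
    filter_upwards [this] with n hn
    rw [← heq]; exact hn
  obtain ⟨n, hn⟩ := hev.exists
  exact ⟨n, lt_of_le_of_lt (Jfun_dyadic_le ν a ha n _) hn⟩

/-- generation cutoff -/
def Gt (a t : ℝ) (m : ℕ) : ℕ := ⌊Real.log t / (a * m * Real.log 2)⌋₊

open Classical in
/-- index set of the adaptive partition -/
def AF (ν : Measure (Fin m → ℝ)) (a t : ℝ) : Finset (ℕ × (Fin m → ℤ)) :=
  ((Finset.range (Gt a t m + 2)) ×ˢ
    Finset.Icc 0 (fun _ => 2 ^ (Gt a t m + 1) - 1)).filter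
    (fun p => p.2 ∈ B m p.1 ∧ Jfun m ν a (dyadicCube m p.1 p.2) < 1/t ∧
      (p.1 = 0 ∨ 1/t ≤ Jfun m ν a (dyadicCube m (p.1 - 1) (fun i => p.2 i / 2))))

lemma mem_AF {ν : Measure (Fin m → ℝ)} {a t : ℝ} {p : ℕ × (Fin m → ℤ)} :
    p ∈ AF ν a t ↔ (p.1 < Gt a t m + 2 ∧
      (0 : Fin m → ℤ) ≤ p.2 ∧ p.2 ≤ (fun _ => 2 ^ (Gt a t m + 1) - 1)) ∧
      p.2 ∈ B m p.1 ∧ Jfun m ν a (dyadicCube m p.1 p.2) < 1/t ∧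
      (p.1 = 0 ∨ 1/t ≤ Jfun m ν a (dyadicCube m (p.1 - 1) (fun i => p.2 i / 2))) := by
  simp [AF, Finset.mem_filter, Finset.mem_product, Finset.mem_range, Finset.mem_Icc,
    and_assoc]

open Classical in
/-- the adaptive partition -/
def PF (ν : Measure (Fin m → ℝ)) (a t : ℝ) : Finset (Set (Fin m → ℝ)) :=
  (AF ν a t).image (fun p => dyadicCube m p.1 p.2)

lemma mem_PF {ν : Measure (Fin m → ℝ)} {a t : ℝ} {Q : Set (Fin m → ℝ)} :
    Q ∈ PF ν a t ↔ ∃ p ∈ AF ν a t, dyadicCube m p.1 p.2 = Q := by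
  simp [PF]

lemma dyadic_isHalfOpenCube (n : ℕ) (l : Fin m → ℤ) : IsHalfOpenCube (dyadicCube m n l) := by
  refine ⟨fun i => (l i : ℝ) / 2 ^ n, 1 / 2 ^ n, by positivity, ?_⟩
  ext x
  simp only [dyadicCube, Set.mem_setOf_eq]
  refine forall_congr' fun i => ?_
  rw [show (l i : ℝ) / 2 ^ n + 1 / 2 ^ n = ((l i : ℝ) + 1) / 2 ^ n by ring]

lemma Jfun_mono_dyadic (ha : 0 < a) {n k : ℕ} {l l' : Fin m → ℤ} (hnk : n ≤ k)
    (hsub : dyadicCube m k l' ⊆ dyadicCube m n l) :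
    Jfun m ν a (dyadicCube m k l') ≤ Jfun m ν a (dyadicCube m n l) := by
  rw [Jfun_dyadic_rpow ν a ha, Jfun_dyadic_rpow ν a ha]
  apply mul_le_mul
  · apply Real.rpow_le_rpow_of_exponent_le one_le_two
    have h1 : (n:ℝ) ≤ (k:ℝ) := by exact_mod_cast hnk
    have h2 : a * (m:ℝ) * n ≤ a * m * k :=
      mul_le_mul_of_nonneg_left h1 (mul_nonneg ha.le (Nat.cast_nonneg m))
    linarith
  · exact ENNReal.toReal_mono (measure_ne_top ν _) (measure_mono hsub)
  · exact ENNReal.toReal_nonneg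
  · exact (Real.rpow_pos_of_pos two_pos _).le

lemma disjoint_aux (ha : 0 < a) {t : ℝ} {p q : ℕ × (Fin m → ℤ)}
    (hp : p ∈ AF ν a t) (hq : q ∈ AF ν a t) (hle : p.1 ≤ q.1)
    (hne : dyadicCube m p.1 p.2 ≠ dyadicCube m q.1 q.2) :
    Disjoint (dyadicCube m p.1 p.2) (dyadicCube m q.1 q.2) := by
  by_contra hcon
  obtain ⟨x, hxp, hxq⟩ := Set.not_disjoint_iff.mp hcon
  obtain ⟨_, hpB, hpJ, _⟩ := mem_AF.mp hp
  obtain ⟨_, hqB, hqJ, hqPar⟩ := mem_AF.mp hq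
  rcases eq_or_lt_of_le hle with heq | hlt
  · apply hne
    have h1 := eq_idx_of_mem hxp
    rw [heq] at h1 ⊢
    rw [h1, eq_idx_of_mem hxq]
  · obtain ⟨k, hk⟩ : ∃ k, q.1 = k + 1 := ⟨q.1 - 1, by omega⟩
    have hq0 : q.1 ≠ 0 := by omega
    have hpar : 1/t ≤ Jfun m ν a (dyadicCube m (q.1 - 1) (fun i => q.2 i / 2)) := by
      rcases hqPar with h | h
      · exact absurd h hq0
      · exact h
    rw [hk] at hpar
    simp only [Nat.add_sub_cancel] at hpar
    have hq2nn : ∀ i, 0 ≤ q.2 i := fun i => (mem_B.mp hqB i).1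
    have hxpar : x ∈ dyadicCube m k (fun i => q.2 i / 2) := by
      apply subset_parent hq2nn
      rw [← hk]; exact hxq
    have hplek : p.1 ≤ k := by omega
    have hsub : dyadicCube m k (fun i => q.2 i / 2) ⊆ dyadicCube m p.1 p.2 :=
      dyadic_nested hplek hxp hxpar
    have := Jfun_mono_dyadic ν a ha hplek hsub
    linarith

lemma pf_cubes {ν : Measure (Fin m → ℝ)} {a t : ℝ} {Q : Set (Fin m → ℝ)} (hQ : Q ∈ PF ν a t) :
    IsHalfOpenCube Q ∧ Q ⊆ unitCube m := by
  obtain ⟨p, hp, rfl⟩ := mem_PF.mp hQ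
  exact ⟨dyadic_isHalfOpenCube _ _, dyadic_subset_unit (mem_AF.mp hp).2.1⟩

lemma pf_disjoint (ha : 0 < a) {t : ℝ} :
    ((PF ν a t : Set (Set (Fin m → ℝ)))).PairwiseDisjoint id := by
  intro Q hQ Q' hQ' hne
  obtain ⟨p, hp, rfl⟩ := mem_PF.mp (Finset.mem_coe.mp hQ)
  obtain ⟨q, hq, rfl⟩ := mem_PF.mp (Finset.mem_coe.mp hQ')
  rcases le_total p.1 q.1 with h | h
  · exact disjoint_aux ν a ha hp hq h hne
  · exact (disjoint_aux ν a ha hq hp h (Ne.symm hne)).symm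

lemma pf_union (ha : 0 < a) (hm : 0 < m) {t : ℝ} (ht : 1 ≤ t) :
    ⋃₀ (PF ν a t : Set (Set (Fin m → ℝ))) = unitCube m := by
  apply Set.Subset.antisymm
  · apply Set.sUnion_subset
    intro Q hQ
    exact (pf_cubes (Finset.mem_coe.mp hQ)).2
  · intro x hx
    have hex := exists_stopping ν a ha hm ht x
    set n₀ := Nat.find hex with hn₀def
    have hJ : Jfun m ν a (dyadicCube m n₀ (idx n₀ x)) < 1/t := Nat.find_spec hex
    have hmin : ∀ k, k < n₀ → 1/t ≤ Jfun m ν a (dyadicCube m k (idx k x)) :=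
      fun k hk => not_lt.mp (Nat.find_min hex hk)
    have hidxB : ∀ n : ℕ, idx n x ∈ B m n := fun n => mem_unit_idx_mem_B hx
    have hn₀le : n₀ ≤ Gt a t m + 1 := by
      rcases Nat.eq_zero_or_pos n₀ with h0 | h0
      · omega
      · obtain ⟨k, hk⟩ : ∃ k, n₀ = k + 1 := ⟨n₀ - 1, by omega⟩
        have hheavy := hmin k (by omega)
        have := gen_le_of_J_ge ν a ha hm ht hheavy
        have hkle : k ≤ Gt a t m := Nat.le_floor this
        omega
    have hmemAF : (n₀, idx n₀ x) ∈ AF ν a t := by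
      rw [mem_AF]
      refine ⟨⟨by omega, ?_, ?_⟩, hidxB n₀, hJ, ?_⟩
      · intro i; exact (mem_B.mp (hidxB n₀) i).1
      · intro i
        have h1 := (mem_B.mp (hidxB n₀) i).2
        have h2 : (2:ℤ) ^ n₀ ≤ 2 ^ (Gt a t m + 1) :=
          pow_le_pow_right₀ (by norm_num) hn₀le
        simp only
        omega
      · rcases Nat.eq_zero_or_pos n₀ with h0 | h0
        · exact Or.inl h0
        · right
          obtain ⟨k, hk⟩ : ∃ k, n₀ = k + 1 := ⟨n₀ - 1, by omega⟩
          have hxm : x ∈ dyadicCube m (k+1) (idx (k+1) x) := mem_idx _ _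
          have hxp : x ∈ dyadicCube m k (fun i => idx (k+1) x i / 2) :=
            subset_parent (fun i => (mem_B.mp (hidxB (k+1)) i).1) hxm
          have hidpar : (fun i => idx (k+1) x i / 2) = idx k x := eq_idx_of_mem hxp
          rw [hk]
          simp only [Nat.add_sub_cancel]
          rw [hidpar]
          exact hmin k (by omega)
    exact Set.mem_sUnion.mpr ⟨dyadicCube m n₀ (idx n₀ x),
      Finset.mem_coe.mpr (mem_PF.mpr ⟨(n₀, idx n₀ x), hmemAF, rfl⟩), mem_idx n₀ x⟩

lemma pf_small {t : ℝ} {Q : Set (Fin m → ℝ)} (hQ : Q ∈ PF ν a t) :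
    Jfun m ν a Q < 1/t := by
  obtain ⟨p, hp, rfl⟩ := mem_PF.mp hQ
  exact (mem_AF.mp hp).2.2.1

lemma isCubePartition_PF (ha : 0 < a) (hm : 0 < m) {t : ℝ} (ht : 1 ≤ t) :
    IsCubePartition m (PF ν a t) :=
  ⟨fun _ hQ => pf_cubes hQ, pf_disjoint ν a ha, pf_union ν a ha hm ht⟩

open Classical in
lemma card_AF_le {t : ℝ} :
    (AF ν a t).card ≤ 1 + ∑ k ∈ Finset.range (Gt a t m + 1), 2 ^ m * (M ν a t k).card := by
  have hfib : ∀ p ∈ AF ν a t, p.1 ∈ Finset.range (Gt a t m + 2) := by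
    intro p hp
    exact Finset.mem_range.mpr (mem_AF.mp hp).1.1
  rw [Finset.card_eq_sum_card_fiberwise hfib, Finset.sum_range_succ']
  have h0 : ((AF ν a t).filter (fun p => p.1 = 0)).card ≤ 1 := by
    rw [Finset.card_le_one]
    intro p hp q hq
    obtain ⟨hp1, hp2⟩ := Finset.mem_filter.mp hp
    obtain ⟨hq1, hq2⟩ := Finset.mem_filter.mp hq
    have hpB : p.2 ∈ B m p.1 := (mem_AF.mp hp1).2.1
    have hqB : q.2 ∈ B m q.1 := (mem_AF.mp hq1).2.1
    rw [hp2] at hpB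
    rw [hq2] at hqB
    have hp0 : p.2 = 0 := by
      funext i
      have := mem_B.mp hpB i
      simp only [pow_zero] at this
      simp only [Pi.zero_apply]
      omega
    have hq0 : q.2 = 0 := by
      funext i
      have := mem_B.mp hqB i
      simp only [pow_zero] at this
      simp only [Pi.zero_apply]
      omega
    have : p = (p.1, p.2) := rfl
    rw [Prod.ext_iff]
    exact ⟨by rw [hp2, hq2], by rw [hp0, hq0]⟩
  have hk : ∀ k, ((AF ν a t).filter (fun p => p.1 = k + 1)).card
      ≤ 2 ^ m * (M ν a t k).card := by
    intro k
    set S := (AF ν a t).filter (fun p => p.1 = k + 1) with hS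
    have himg : S.image (fun p => fun i => p.2 i / 2) ⊆ M ν a t k := by
      intro c hc
      obtain ⟨p, hp, rfl⟩ := Finset.mem_image.mp hc
      obtain ⟨hpAF, hp1⟩ := Finset.mem_filter.mp hp
      obtain ⟨_, hpB, _, hpPar⟩ := mem_AF.mp hpAF
      rw [mem_M]
      constructor
      · rw [mem_B]
        intro i
        have h1 := mem_B.mp hpB i
        rw [hp1] at h1
        have h2 : (2:ℤ) ^ (k+1) = 2 * 2 ^ k := by ring
        omega
      · rcases hpPar with h | h
        · omega
        · rw [hp1] at h
          simpa using h
    have hfiber : ∀ c ∈ S.image (fun p => fun i => p.2 i / 2),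
        (S.filter (fun p => (fun i => p.2 i / 2) = c)).card ≤ 2 ^ m := by
      intro c _
      have hsub : S.filter (fun p => (fun i => p.2 i / 2) = c)
          ⊆ ({k+1} : Finset ℕ) ×ˢ Finset.Icc (fun i => 2 * c i) (fun i => 2 * c i + 1) := by
        intro p hp
        obtain ⟨hpS, hpc⟩ := Finset.mem_filter.mp hp
        obtain ⟨hpAF, hp1⟩ := Finset.mem_filter.mp hpS
        have hpB : p.2 ∈ B m p.1 := (mem_AF.mp hpAF).2.1
        rw [Finset.mem_product, Finset.mem_singleton, Finset.mem_Icc]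
        refine ⟨hp1, ?_, ?_⟩
        · intro i
          have h1 := (mem_B.mp hpB i).1
          have h2 : p.2 i / 2 = c i := congrFun hpc i
          simp only
          omega
        · intro i
          have h1 := (mem_B.mp hpB i).1
          have h2 : p.2 i / 2 = c i := congrFun hpc i
          simp only
          omega
      calc (S.filter (fun p => (fun i => p.2 i / 2) = c)).card
          ≤ (({k+1} : Finset ℕ) ×ˢ Finset.Icc (fun i => 2 * c i) (fun i => 2 * c i + 1)).card :=
            Finset.card_le_card hsub
        _ = 2 ^ m := by
            rw [Finset.card_product, Finset.card_singleton, one_mul, Pi.card_Icc]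
            have : ∀ i : Fin m, (Finset.Icc (2 * c i) (2 * c i + 1)).card = 2 := by
              intro i
              rw [Int.card_Icc]
              rw [show 2 * c i + 1 + 1 - 2 * c i = 2 by ring]
              rfl
            rw [Finset.prod_congr rfl (fun i _ => this i), Finset.prod_const,
              Finset.card_univ, Fintype.card_fin]
    calc S.card ≤ 2 ^ m * (S.image (fun p => fun i => p.2 i / 2)).card :=
          Finset.card_le_mul_card_image _ _ hfiber
      _ ≤ 2 ^ m * (M ν a t k).card :=
          Nat.mul_le_mul_left _ (Finset.card_le_card himg)
  calc (∑ k ∈ Finset.range (Gt a t m + 1),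
        ((AF ν a t).filter (fun p => p.1 = k + 1)).card)
        + ((AF ν a t).filter (fun p => p.1 = 0)).card
      ≤ (∑ k ∈ Finset.range (Gt a t m + 1), 2 ^ m * (M ν a t k).card) + 1 := by
        apply add_le_add (Finset.sum_le_sum (fun k _ => hk k)) h0
    _ = 1 + ∑ k ∈ Finset.range (Gt a t m + 1), 2 ^ m * (M ν a t k).card := by ring

lemma partCount_le_card_PF (ha : 0 < a) (hm : 0 < m) {t : ℝ} (ht : 1 ≤ t) :
    partCount m ν a t ≤ (PF ν a t).card := by
  apply Nat.sInf_le
  exact ⟨PF ν a t, isCubePartition_PF ν a ha hm ht, fun Q hQ => pf_small ν a hQ, rfl⟩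

open Classical in
lemma partCount_le (ha : 0 < a) (hm : 0 < m) {t : ℝ} (ht : 1 ≤ t) :
    partCount m ν a t ≤ 1 + ∑ k ∈ Finset.range (Gt a t m + 1), 2 ^ m * (M ν a t k).card :=
  le_trans (partCount_le_card_PF ν a ha hm ht)
    (le_trans (Finset.card_image_le) (card_AF_le ν a))

lemma eventually_partCount_poly {s ε' : ℝ} (ha : 0 < a) (hm : 0 < m)
    (hν : ν (unitCube m) = 1) (hs : 0 < s) (hε' : 0 < ε')
    (hc : lqSpectrum m ν s ≤ a * m * s) :
    ∃ C : ℝ, 0 < C ∧ ∀ᶠ t : ℝ in atTop,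
      (partCount m ν a t : ℝ) ≤ (C + C * Real.log t) * t ^ (s + ε') := by
  have hm' : (0:ℝ) < m := by exact_mod_cast hm
  have hlog2 : (0:ℝ) < Real.log 2 := Real.log_pos (by norm_num)
  set ε : ℝ := ε' * (a * m) with hεdef
  have hε : 0 < ε := by positivity
  obtain ⟨N, hN⟩ := (eventually_card_M_le ν a ha hs hε hν hc).exists_forall_of_atTop
  set C₀ : ℝ := 2 ^ (N * m) with hC₀
  have hC₀pos : (0:ℝ) < C₀ := by positivity
  set D : ℝ := 2 ^ m * (C₀ + 1) with hD
  have hDpos : (0:ℝ) < D := by positivity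
  set c₁ : ℝ := 1 / (a * m * Real.log 2) with hc₁
  have hc₁pos : (0:ℝ) < c₁ := by positivity
  refine ⟨1 + D + D * c₁, by positivity, ?_⟩
  filter_upwards [Filter.eventually_ge_atTop (1:ℝ)] with t ht
  have ht0 : (0:ℝ) < t := lt_of_lt_of_le one_pos ht
  have hlogt : 0 ≤ Real.log t := Real.log_nonneg ht
  set G : ℕ := Gt a t m with hG
  have hGle : (G:ℝ) ≤ Real.log t / (a * m * Real.log 2) :=
    Nat.floor_le (by positivity)
  -- pointwise bound on card M
  have hMk : ∀ k ∈ Finset.range (G + 1),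
      ((M ν a t k).card : ℝ) ≤ C₀ + t ^ s * (2:ℝ) ^ (ε * G) := by
    intro k hk
    have hkG : k ≤ G := by
      have := Finset.mem_range.mp hk; omega
    have hts : (0:ℝ) < t ^ s := Real.rpow_pos_of_pos ht0 _
    rcases lt_or_ge k N with hkN | hkN
    · have h1 : (M ν a t k).card ≤ (B m k).card := Finset.card_le_card (Finset.filter_subset _ _)
      have h2 : ((M ν a t k).card : ℝ) ≤ C₀ := by
        rw [hC₀]
        calc ((M ν a t k).card : ℝ) ≤ ((B m k).card : ℝ) := by exact_mod_cast h1
          _ = 2 ^ (k * m) := by rw [card_B]; push_cast; ring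
          _ ≤ 2 ^ (N * m) := by
              apply pow_le_pow_right₀ (by norm_num)
              exact Nat.mul_le_mul_right m hkN.le
      have : (0:ℝ) ≤ t ^ s * (2:ℝ) ^ (ε * G) := by positivity
      linarith
    · have h1 := hN k hkN t ht
      have h2 : (2:ℝ) ^ (ε * (k:ℝ)) ≤ (2:ℝ) ^ (ε * (G:ℝ)) := by
        apply Real.rpow_le_rpow_of_exponent_le one_le_two
        have : (k:ℝ) ≤ G := by exact_mod_cast hkG
        nlinarith
      have : t ^ s * (2:ℝ) ^ (ε * (k:ℝ)) ≤ t ^ s * (2:ℝ) ^ (ε * (G:ℝ)) :=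
        mul_le_mul_of_nonneg_left h2 hts.le
      linarith
  -- 2 ^ (ε G) ≤ t ^ ε'
  have h2G : (2:ℝ) ^ (ε * (G:ℝ)) ≤ t ^ ε' := by
    rw [show (2:ℝ) ^ (ε * (G:ℝ)) = Real.exp (ε * G * Real.log 2) by
        rw [Real.rpow_def_of_pos two_pos]; ring_nf,
      show t ^ ε' = Real.exp (ε' * Real.log t) by rw [Real.rpow_def_of_pos ht0]; ring_nf]
    apply Real.exp_le_exp.mpr
    have := mul_le_mul_of_nonneg_left hGle (le_of_lt (mul_pos hε hlog2))
    calc ε * G * Real.log 2 = ε * Real.log 2 * G := by ring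
      _ ≤ ε * Real.log 2 * (Real.log t / (a * m * Real.log 2)) := this
      _ = ε' * Real.log t := by rw [hεdef]; field_simp
  -- assemble
  have hmain := partCount_le ν a ha hm ht
  have hcast : (partCount m ν a t : ℝ)
      ≤ 1 + ∑ k ∈ Finset.range (G + 1), (2:ℝ) ^ m * ((M ν a t k).card : ℝ) := by
    have := (Nat.cast_le (α := ℝ)).mpr hmain
    push_cast at this
    convert this using 2
  have hsum : ∑ k ∈ Finset.range (G + 1), (2:ℝ) ^ m * ((M ν a t k).card : ℝ)
      ≤ (G + 1 : ℝ) * ((2:ℝ) ^ m * (C₀ + t ^ s * (2:ℝ) ^ (ε * G))) := by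
    calc ∑ k ∈ Finset.range (G + 1), (2:ℝ) ^ m * ((M ν a t k).card : ℝ)
        ≤ ∑ _k ∈ Finset.range (G + 1), (2:ℝ) ^ m * (C₀ + t ^ s * (2:ℝ) ^ (ε * G)) := by
          apply Finset.sum_le_sum
          intro k hk
          exact mul_le_mul_of_nonneg_left (hMk k hk) (by positivity)
      _ = (G + 1 : ℝ) * ((2:ℝ) ^ m * (C₀ + t ^ s * (2:ℝ) ^ (ε * G))) := by
          rw [Finset.sum_const, Finset.card_range]
          push_cast
          ring
  have hts1 : (1:ℝ) ≤ t ^ (s + ε') := by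
    calc (1:ℝ) = 1 ^ (s + ε') := (Real.one_rpow _).symm
      _ ≤ t ^ (s + ε') := Real.rpow_le_rpow (by norm_num) ht (by positivity)
  have htse : t ^ s * t ^ ε' = t ^ (s + ε') := (Real.rpow_add ht0 _ _).symm
  have hG1 : (G:ℝ) + 1 ≤ c₁ * Real.log t + 1 := by
    rw [hc₁]
    have : (G:ℝ) ≤ 1 / (a * m * Real.log 2) * Real.log t := by
      rw [one_div, inv_mul_eq_div]; exact hGle
    linarith
  have hts : (0:ℝ) < t ^ s := Real.rpow_pos_of_pos ht0 _
  have hfin : C₀ + t ^ s * (2:ℝ) ^ (ε * G) ≤ (C₀ + 1) * t ^ (s + ε') := by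
    have h1 : t ^ s * (2:ℝ) ^ (ε * G) ≤ t ^ s * t ^ ε' :=
      mul_le_mul_of_nonneg_left h2G hts.le
    rw [htse] at h1
    have h2 : C₀ ≤ C₀ * t ^ (s + ε') := le_mul_of_one_le_right hC₀pos.le hts1
    nlinarith
  calc (partCount m ν a t : ℝ)
      ≤ 1 + ∑ k ∈ Finset.range (G + 1), (2:ℝ) ^ m * ((M ν a t k).card : ℝ) := hcast
    _ ≤ 1 + (G + 1 : ℝ) * ((2:ℝ) ^ m * (C₀ + t ^ s * (2:ℝ) ^ (ε * G))) := by linarith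
    _ ≤ 1 + (c₁ * Real.log t + 1) * ((2:ℝ) ^ m * ((C₀ + 1) * t ^ (s + ε'))) := by
        apply add_le_add_right
        apply mul_le_mul hG1
        · exact mul_le_mul_of_nonneg_left hfin (by positivity)
        · positivity
        · positivity
    _ ≤ (1 + D + D * c₁ + (1 + D + D * c₁) * Real.log t) * t ^ (s + ε') := by
        have hT1 : (1:ℝ) ≤ t ^ (s + ε') := hts1
        have hLT : 0 ≤ Real.log t * t ^ (s + ε') := mul_nonneg hlogt (by linarith)
        have hexp : 1 + (c₁ * Real.log t + 1) * (2 ^ m * ((C₀ + 1) * t ^ (s + ε')))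
            = 1 + D * t ^ (s + ε') + (c₁ * D) * (Real.log t * t ^ (s + ε')) := by
          rw [hD]; ring
        have hexp2 : (1 + D + D * c₁ + (1 + D + D * c₁) * Real.log t) * t ^ (s + ε')
            = (1 + D + D * c₁) * t ^ (s + ε')
              + (1 + D + D * c₁) * (Real.log t * t ^ (s + ε')) := by ring
        rw [hexp, hexp2]
        have h1 : 1 + D * t ^ (s + ε') ≤ (1 + D + D * c₁) * t ^ (s + ε') := by
          have hq : (0:ℝ) ≤ D * c₁ * t ^ (s + ε') :=
            mul_nonneg (mul_nonneg hDpos.le hc₁pos.le) (by linarith)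
          nlinarith [hq, hT1]
        have h2 : (c₁ * D) * (Real.log t * t ^ (s + ε'))
            ≤ (1 + D + D * c₁) * (Real.log t * t ^ (s + ε')) := by
          apply mul_le_mul_of_nonneg_right _ hLT
          nlinarith [hDpos.le]
        linarith
    _ = ((1 + D + D * c₁) + (1 + D + D * c₁) * Real.log t) * t ^ (s + ε') := by ring

lemma eventually_partCount_rpow {s δ : ℝ} (ha : 0 < a) (hm : 0 < m)
    (hν : ν (unitCube m) = 1) (hs : 0 < s) (hδ : 0 < δ)
    (hc : lqSpectrum m ν s ≤ a * m * s) :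
    ∀ᶠ t : ℝ in atTop, (partCount m ν a t : ℝ) ≤ t ^ (s + δ) := by
  have hε' : 0 < δ / 2 := by linarith
  obtain ⟨C, hC, hev⟩ := eventually_partCount_poly ν a ha hm hν hs hε' hc
  have hlo := (isLittleO_log_rpow_atTop hε').def (show (0:ℝ) < 1/(2*C) by positivity)
  have hrt : Tendsto (fun t : ℝ => t ^ (δ/2)) atTop atTop := tendsto_rpow_atTop hε'
  have hge : ∀ᶠ t : ℝ in atTop, 2 * C ≤ t ^ (δ/2) := hrt.eventually_ge_atTop _
  filter_upwards [hev, hlo, hge, Filter.eventually_ge_atTop (1:ℝ)] with t h1 h2 h3 ht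
  have ht0 : (0:ℝ) < t := lt_of_lt_of_le one_pos ht
  have hlogt : 0 ≤ Real.log t := Real.log_nonneg ht
  have htd : (0:ℝ) < t ^ (δ/2) := Real.rpow_pos_of_pos ht0 _
  have h2' : Real.log t ≤ 1/(2*C) * t ^ (δ/2) := by
    have := h2
    rw [Real.norm_eq_abs, Real.norm_eq_abs, abs_of_nonneg hlogt,
      abs_of_nonneg htd.le] at this
    exact this
  have hsum : C + C * Real.log t ≤ t ^ (δ/2) := by
    have hClog : C * Real.log t ≤ t ^ (δ/2) / 2 := by
      have := mul_le_mul_of_nonneg_left h2' hC.le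
      calc C * Real.log t ≤ C * (1/(2*C) * t ^ (δ/2)) := this
        _ = t ^ (δ/2) / 2 := by field_simp
    have hCle : C ≤ t ^ (δ/2) / 2 := by linarith
    linarith
  have hpos : (0:ℝ) ≤ t ^ (s + δ/2) := (Real.rpow_pos_of_pos ht0 _).le
  calc (partCount m ν a t : ℝ) ≤ (C + C * Real.log t) * t ^ (s + δ/2) := h1
    _ ≤ t ^ (δ/2) * t ^ (s + δ/2) := mul_le_mul_of_nonneg_right hsum hpos
    _ = t ^ (s + δ) := by
        rw [← Real.rpow_add ht0]
        congr 1
        ring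

lemma hPart_le_of_mem {s : ℝ} (ha : 0 < a) (hm : 0 < m)
    (hν : ν (unitCube m) = 1) (hs : 0 < s) (hc : lqSpectrum m ν s ≤ a * m * s) :
    hPart m ν a ≤ ENNReal.ofReal s := by
  apply ENNReal.le_of_forall_pos_le_add
  intro η hη _
  have hη' : (0:ℝ) < η := hη
  have hkey : ∀ᶠ t : ℝ in atTop,
      ENNReal.ofReal (Real.log (partCount m ν a t) / Real.log t)
        ≤ ENNReal.ofReal (s + η) := by
    filter_upwards [eventually_partCount_rpow ν a ha hm hν hs hη' hc,
      Filter.eventually_ge_atTop (2:ℝ)] with t h1 ht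
    have ht1 : (1:ℝ) < t := by linarith
    have ht0 : (0:ℝ) < t := by linarith
    have hlogt : 0 < Real.log t := Real.log_pos ht1
    apply ENNReal.ofReal_le_ofReal
    rcases Nat.eq_zero_or_pos (partCount m ν a t) with h0 | h0
    · rw [h0]
      simp only [Nat.cast_zero, Real.log_zero, zero_div]
      positivity
    · have hN1 : (1:ℝ) ≤ (partCount m ν a t : ℝ) := by exact_mod_cast h0
      rw [div_le_iff₀ hlogt]
      calc Real.log (partCount m ν a t) ≤ Real.log (t ^ (s + η)) :=
            Real.log_le_log (by linarith) h1
        _ = (s + η) * Real.log t := Real.log_rpow ht0 _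
  have hlimsup : hPart m ν a ≤ ENNReal.ofReal (s + η) :=
    limsup_le_of_le (by isBoundedDefault) hkey
  calc hPart m ν a ≤ ENNReal.ofReal (s + η) := hlimsup
    _ ≤ ENNReal.ofReal s + ENNReal.ofReal η := ENNReal.ofReal_add_le
    _ = ENNReal.ofReal s + η := by rw [ENNReal.ofReal_coe_nnreal]

end L26

/-- **Lemma 2.6**: the upper `ν`-partition entropy satisfies `h_a ≤ s_{am}`. -/
theorem statement1 (m : ℕ) (hm : 0 < m) (ν : Measure (Fin m → ℝ))
    [IsProbabilityMeasure ν] (hν : ν (unitCube m) = 1) (a : ℝ) (ha : 0 < a) :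
    hPart m ν a ≤ ENNReal.ofReal (sb m ν (a * m)) := by
  set S : Set ℝ := {s : ℝ | 0 < s ∧ lqSpectrum m ν s - (a * m) * s ≤ 0} with hS
  have hne : S.Nonempty := by
    refine ⟨1, one_pos, ?_⟩
    rw [L26.lqSpectrum_one ν hν]
    have : (0:ℝ) < a * m := by
      have : (0:ℝ) < m := by exact_mod_cast hm
      positivity
    linarith
  have hsb : sb m ν (a * m) = sInf S := rfl
  have hInf0 : 0 ≤ sInf S := le_csInf hne (fun s hs => hs.1.le)
  apply ENNReal.le_of_forall_pos_le_add
  intro η hη _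
  have hη' : (0:ℝ) < η := hη
  obtain ⟨s, hsS, hslt⟩ : ∃ s ∈ S, s < sInf S + η :=
    exists_lt_of_csInf_lt hne (lt_add_of_pos_right _ hη')
  have h1 : hPart m ν a ≤ ENNReal.ofReal s :=
    L26.hPart_le_of_mem ν a ha hm hν hsS.1 (by linarith [hsS.2])
  calc hPart m ν a ≤ ENNReal.ofReal s := h1
    _ ≤ ENNReal.ofReal (sInf S + η) := ENNReal.ofReal_le_ofReal hslt.le
    _ ≤ ENNReal.ofReal (sInf S) + ENNReal.ofReal η := ENNReal.ofReal_add_le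
    _ = ENNReal.ofReal (sb m ν (a * m)) + η := by
        rw [hsb, ENNReal.ofReal_coe_nnreal]
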